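/- Objective convergence controlled by gradient convergence: in the Lasso case (trivial groups Γ = {{j}}_{j=1}^p) with F convex, C^{1,1} satisfying ‖∇F(x)−∇F(x')‖_∞ ≤ M_F‖x−x'‖₁ and gradient bound K on the relevant sublevel set, let (u_k,v_k) be gradient descent iterates on G(u,v) = ½‖u‖² + ½‖v‖² + F(u·v) with stepsize τ = 1/(κ M_G) where M_G bounds the Lipschitz constant of ∇G and κ = max(1,(1+K²)/M_G), and set x_k := u_k·v_k, Φ(x) := F(x) + ‖x‖₁. Then there exists C > 0 such that for all k, Φ(x_k) − lim_{j→∞} Φ(x_j) ≤ C Σ_{j=k}^∞ ‖∇G(u_j,v_j)‖² + C ρ^k, where ρ := 1 − 1/(κ M_G). In particular, if ‖∇G(u_k,v_k)‖ = O(1/k), then Φ(x_k) converges at rate O(1/k). -/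

import Mathlib

open Filter Finset

/-- The continuous linear functional `w ↦ ⟨grad, w⟩` on `ℝ^p`. -/
noncomputable def vecCLM {p : ℕ} (grad : Fin p → ℝ) : (Fin p → ℝ) →L[ℝ] ℝ :=
  LinearMap.toContinuousLinearMap (∑ i, grad i • LinearMap.proj i)

/-- `∇_u G(u,v) = u + v·∇F(u·v)` (trivial groups, coordinatewise product). -/
def guL {p : ℕ} (DF : (Fin p → ℝ) → (Fin p → ℝ)) (u v : Fin p → ℝ) : Fin p → ℝ :=
  fun i => u i + v i * DF (fun i' => u i' * v i') i

/-- `∇_v G(u,v) = v + u·∇F(u·v)` (trivial groups). -/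
def gvL {p : ℕ} (DF : (Fin p → ℝ) → (Fin p → ℝ)) (u v : Fin p → ℝ) : Fin p → ℝ :=
  fun i => v i + u i * DF (fun i' => u i' * v i') i

/-- `G(u,v) = ½‖u‖² + ½‖v‖² + F(u·v)` (trivial groups). -/
noncomputable def Gobj {p : ℕ} (F : (Fin p → ℝ) → ℝ) (u v : Fin p → ℝ) : ℝ :=
  (1/2) * ∑ i, (u i)^2 + (1/2) * ∑ i, (v i)^2 + F (fun i => u i * v i)

/-- `‖∇G(u,v)‖²` (trivial groups). -/
noncomputable def gradGsqL {p : ℕ} (DF : (Fin p → ℝ) → (Fin p → ℝ))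
    (u v : Fin p → ℝ) : ℝ :=
  ∑ i, (guL DF u v i)^2 + ∑ i, (gvL DF u v i)^2

lemma vecCLM_apply {p : ℕ} (grad w : Fin p → ℝ) : vecCLM grad w = ∑ i, grad i * w i := by
  simp [vecCLM, LinearMap.toContinuousLinearMap]

/-- Cauchy-Schwarz for a pair of sums. -/
lemma cs2 {p : ℕ} (f g a b : Fin p → ℝ) :
    |(∑ i, f i * a i) + ∑ i, g i * b i| ≤
      Real.sqrt ((∑ i, (f i)^2) + ∑ i, (g i)^2) *
        Real.sqrt ((∑ i, (a i)^2) + ∑ i, (b i)^2) := by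
  have h := Finset.sum_mul_sq_le_sq_mul_sq Finset.univ (Sum.elim f g) (Sum.elim a b)
  rw [Fintype.sum_sum_type, Fintype.sum_sum_type, Fintype.sum_sum_type] at h
  simp only [Sum.elim_inl, Sum.elim_inr] at h
  have h2 : |(∑ i, f i * a i) + ∑ i, g i * b i| =
      Real.sqrt ((((∑ i, f i * a i) + ∑ i, g i * b i))^2) := (Real.sqrt_sq_eq_abs _).symm
  rw [h2, ← Real.sqrt_mul (by positivity)]
  exact Real.sqrt_le_sqrt h

lemma Gcurve_hasDerivAt {p : ℕ} (F : (Fin p → ℝ) → ℝ) (DF : (Fin p → ℝ) → (Fin p → ℝ))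
    (hDF : ∀ x, HasFDerivAt F (vecCLM (DF x)) x)
    (u v a b : Fin p → ℝ) (t : ℝ) :
    HasDerivAt (fun s => Gobj F (fun i => u i + s * a i) (fun i => v i + s * b i))
      ((∑ i, guL DF (fun i => u i + t * a i) (fun i => v i + t * b i) i * a i)
       + ∑ i, gvL DF (fun i => u i + t * a i) (fun i => v i + t * b i) i * b i) t := by
  have hu : ∀ i : Fin p, HasDerivAt (fun s : ℝ => u i + s * a i) (a i) t := by
    intro i
    simpa using ((hasDerivAt_id t).mul_const (a i)).const_add (u i)
  have hv : ∀ i : Fin p, HasDerivAt (fun s : ℝ => v i + s * b i) (b i) t := by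
    intro i
    simpa using ((hasDerivAt_id t).mul_const (b i)).const_add (v i)
  have h1 : HasDerivAt (fun s : ℝ => ∑ i, (u i + s * a i)^2)
      (∑ i, 2 * (u i + t * a i) * a i) t := by
    refine HasDerivAt.fun_sum fun i _ => ?_
    have := (hu i).fun_pow 2
    simpa [mul_comm, mul_assoc, mul_left_comm] using this
  have h2 : HasDerivAt (fun s : ℝ => ∑ i, (v i + s * b i)^2)
      (∑ i, 2 * (v i + t * b i) * b i) t := by
    refine HasDerivAt.fun_sum fun i _ => ?_
    have := (hv i).fun_pow 2
    simpa [mul_comm, mul_assoc, mul_left_comm] using this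
  have hc : HasDerivAt (fun s : ℝ => (fun i => (u i + s * a i) * (v i + s * b i)))
      (fun i => a i * (v i + t * b i) + (u i + t * a i) * b i) t := by
    rw [hasDerivAt_pi]
    intro i
    exact (hu i).mul (hv i)
  have hF : HasDerivAt (fun s : ℝ => F (fun i => (u i + s * a i) * (v i + s * b i)))
      (vecCLM (DF (fun i => (u i + t * a i) * (v i + t * b i)))
        (fun i => a i * (v i + t * b i) + (u i + t * a i) * b i)) t :=
    (hDF _).comp_hasDerivAt t hc
  have htot := ((h1.const_mul (1/2:ℝ)).fun_add (h2.const_mul (1/2:ℝ))).fun_add hF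
  have heq : (1/2:ℝ) * (∑ i, 2 * (u i + t * a i) * a i)
      + (1/2:ℝ) * (∑ i, 2 * (v i + t * b i) * b i)
      + vecCLM (DF (fun i => (u i + t * a i) * (v i + t * b i)))
        (fun i => a i * (v i + t * b i) + (u i + t * a i) * b i)
      = (∑ i, guL DF (fun i => u i + t * a i) (fun i => v i + t * b i) i * a i)
       + ∑ i, gvL DF (fun i => u i + t * a i) (fun i => v i + t * b i) i * b i := by
    rw [vecCLM_apply, Finset.mul_sum, Finset.mul_sum, ← Finset.sum_add_distrib,
      ← Finset.sum_add_distrib, ← Finset.sum_add_distrib]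
    refine Finset.sum_congr rfl fun i _ => ?_
    simp only [guL, gvL]
    ring
  rw [heq] at htot
  simpa [Gobj] using htot

lemma taylor_bound {p : ℕ} (F : (Fin p → ℝ) → ℝ) (DF : (Fin p → ℝ) → (Fin p → ℝ))
    (hDF : ∀ x, HasFDerivAt F (vecCLM (DF x)) x) (MG B : ℝ)
    (hMGlip : ∀ u₁ v₁ u₂ v₂ : Fin p → ℝ,
      (1/2) * ((∑ i, (u₁ i)^2) + ∑ i, (v₁ i)^2) ≤ B^2/2 →
      (1/2) * ((∑ i, (u₂ i)^2) + ∑ i, (v₂ i)^2) ≤ B^2/2 →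
      Real.sqrt ((∑ i, (guL DF u₁ v₁ i - guL DF u₂ v₂ i)^2)
          + ∑ i, (gvL DF u₁ v₁ i - gvL DF u₂ v₂ i)^2)
        ≤ MG * Real.sqrt ((∑ i, (u₁ i - u₂ i)^2) + ∑ i, (v₁ i - v₂ i)^2))
    (u v a b : Fin p → ℝ)
    (hb0 : (1/2) * ((∑ i, (u i)^2) + ∑ i, (v i)^2) ≤ B^2/2)
    (hb1 : (1/2) * ((∑ i, (u i + a i)^2) + ∑ i, (v i + b i)^2) ≤ B^2/2) :
    |Gobj F (fun i => u i + a i) (fun i => v i + b i) - Gobj F u v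
      - ((∑ i, guL DF u v i * a i) + ∑ i, gvL DF u v i * b i)|
    ≤ MG/2 * ((∑ i, (a i)^2) + ∑ i, (b i)^2) := by
  set S : ℝ := (∑ i, (a i)^2) + ∑ i, (b i)^2 with hSdef
  have hS : 0 ≤ S := by positivity
  set φ : ℝ → ℝ := fun s => Gobj F (fun i => u i + s * a i) (fun i => v i + s * b i) with hφ
  set D : ℝ → ℝ := fun t =>
      (∑ i, guL DF (fun i => u i + t * a i) (fun i => v i + t * b i) i * a i)
       + ∑ i, gvL DF (fun i => u i + t * a i) (fun i => v i + t * b i) i * b i with hDdef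
  have hD : ∀ t, HasDerivAt φ (D t) t := fun t => Gcurve_hasDerivAt F DF hDF u v a b t
  have hseg : ∀ t ∈ Set.Icc (0:ℝ) 1,
      (1/2) * ((∑ i, (u i + t * a i)^2) + ∑ i, (v i + t * b i)^2) ≤ B^2/2 := by
    intro t ht
    have h1 : ∀ (x y : Fin p → ℝ), (∑ i, (x i + t * y i)^2)
        ≤ (1-t) * (∑ i, (x i)^2) + t * (∑ i, (x i + y i)^2) := by
      intro x y
      rw [Finset.mul_sum, Finset.mul_sum, ← Finset.sum_add_distrib]
      refine Finset.sum_le_sum fun i _ => ?_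
      nlinarith [mul_nonneg ht.1 (sub_nonneg.2 ht.2), sq_nonneg (x i - (x i + y i))]
    have h2 := h1 u a
    have h3 := h1 v b
    nlinarith [ht.1, ht.2]
  have hDlip : ∀ t ∈ Set.Icc (0:ℝ) 1, |D t - D 0| ≤ MG * t * S := by
    intro t ht
    have hsplit : D t - D 0 =
        (∑ i, (guL DF (fun i => u i + t * a i) (fun i => v i + t * b i) i
            - guL DF (fun i => u i + 0 * a i) (fun i => v i + 0 * b i) i) * a i)
        + ∑ i, (gvL DF (fun i => u i + t * a i) (fun i => v i + t * b i) i
            - gvL DF (fun i => u i + 0 * a i) (fun i => v i + 0 * b i) i) * b i := by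
      simp only [hDdef, sub_mul, Finset.sum_sub_distrib]
      ring
    have hz : (fun i => u i + 0 * a i) = u := by funext i; ring
    have hz' : (fun i => v i + 0 * b i) = v := by funext i; ring
    rw [hsplit, hz, hz']
    refine le_trans (cs2 _ _ _ _) ?_
    have hlip := hMGlip (fun i => u i + t * a i) (fun i => v i + t * b i) u v
      (hseg t ht) (by simpa using hseg 0 ⟨le_refl 0, zero_le_one⟩)
    have hdist : Real.sqrt ((∑ i, ((u i + t * a i) - u i)^2) + ∑ i, ((v i + t * b i) - v i)^2)
        = t * Real.sqrt S := by
      have : (∑ i, ((u i + t * a i) - u i)^2) + ∑ i, ((v i + t * b i) - v i)^2 = t^2 * S := by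
        rw [hSdef, mul_add, Finset.mul_sum, Finset.mul_sum]
        congr 1 <;> exact Finset.sum_congr rfl fun i _ => by ring
      rw [this, Real.sqrt_mul (sq_nonneg t), Real.sqrt_sq ht.1]
    rw [hdist] at hlip
    calc Real.sqrt ((∑ i, (guL DF (fun i => u i + t * a i) (fun i => v i + t * b i) i
            - guL DF u v i)^2)
          + ∑ i, (gvL DF (fun i => u i + t * a i) (fun i => v i + t * b i) i
            - gvL DF u v i)^2) * Real.sqrt S
        ≤ (MG * (t * Real.sqrt S)) * Real.sqrt S := by
          apply mul_le_mul_of_nonneg_right hlip (Real.sqrt_nonneg _)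
      _ = MG * t * S := by
          rw [mul_assoc, mul_assoc, Real.mul_self_sqrt hS]; ring
  have interior_eq : interior (Set.Icc (0:ℝ) 1) = Set.Ioo 0 1 := interior_Icc
  have hup : φ 1 - φ 0 - D 0 ≤ MG * S / 2 := by
    set ψ : ℝ → ℝ := fun t => φ 0 + t * D 0 + MG * S * t^2 / 2 - φ t with hψdef
    have hψ : ∀ t, HasDerivAt ψ (D 0 + MG * S * t - D t) t := by
      intro t
      have h1 : HasDerivAt (fun t : ℝ => φ 0 + t * D 0 + MG * S * t^2 / 2)
          (D 0 + MG * S * t) t := by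
        have ha : HasDerivAt (fun t : ℝ => t * D 0) (D 0) t := by
          simpa using (hasDerivAt_id t).mul_const (D 0)
        have hb : HasDerivAt (fun t : ℝ => MG * S * t^2 / 2) (MG * S * t) t := by
          have := ((hasDerivAt_pow 2 t).const_mul (MG * S)).div_const 2
          exact this.congr_deriv (by push_cast; ring)
        simpa using ((ha.const_add (φ 0)).fun_add hb)
      simpa using h1.fun_sub (hD t)
    have hmono : MonotoneOn ψ (Set.Icc (0:ℝ) 1) := by
      apply monotoneOn_of_hasDerivWithinAt_nonneg (convex_Icc 0 1)
        (fun t _ => (hψ t).continuousAt.continuousWithinAt)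
        (fun t ht => ((hψ t).hasDerivWithinAt))
      intro t ht
      rw [interior_eq] at ht
      have := hDlip t ⟨le_of_lt ht.1, le_of_lt ht.2⟩
      have h2 := abs_le.1 this
      nlinarith [h2.2]
    have := hmono (Set.mem_Icc.2 ⟨le_refl 0, zero_le_one⟩)
      (Set.mem_Icc.2 ⟨zero_le_one, le_refl 1⟩) zero_le_one
    simp only [hψdef] at this
    nlinarith [this]
  have hlow : -(MG * S / 2) ≤ φ 1 - φ 0 - D 0 := by
    set χ : ℝ → ℝ := fun t => φ t - φ 0 - t * D 0 + MG * S * t^2 / 2 with hχdef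
    have hχ : ∀ t, HasDerivAt χ (D t - D 0 + MG * S * t) t := by
      intro t
      have ha : HasDerivAt (fun t : ℝ => t * D 0) (D 0) t := by
        simpa using (hasDerivAt_id t).mul_const (D 0)
      have hb : HasDerivAt (fun t : ℝ => MG * S * t^2 / 2) (MG * S * t) t := by
        have := ((hasDerivAt_pow 2 t).const_mul (MG * S)).div_const 2
        exact this.congr_deriv (by push_cast; ring)
      simpa using (((hD t).sub_const (φ 0)).fun_sub ha).fun_add hb
    have hmono : MonotoneOn χ (Set.Icc (0:ℝ) 1) := by
      apply monotoneOn_of_hasDerivWithinAt_nonneg (convex_Icc 0 1)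
        (fun t _ => (hχ t).continuousAt.continuousWithinAt)
        (fun t ht => ((hχ t).hasDerivWithinAt))
      intro t ht
      rw [interior_eq] at ht
      have := hDlip t ⟨le_of_lt ht.1, le_of_lt ht.2⟩
      have h2 := abs_le.1 this
      nlinarith [h2.1]
    have := hmono (Set.mem_Icc.2 ⟨le_refl 0, zero_le_one⟩)
      (Set.mem_Icc.2 ⟨zero_le_one, le_refl 1⟩) zero_le_one
    simp only [hχdef] at this
    nlinarith [this]
  have hφ1 : φ 1 = Gobj F (fun i => u i + a i) (fun i => v i + b i) := by
    simp only [hφ]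
    congr 1 <;> funext i <;> ring
  have hφ0 : φ 0 = Gobj F u v := by
    simp only [hφ]
    congr 1 <;> funext i <;> ring
  have hD0 : D 0 = (∑ i, guL DF u v i * a i) + ∑ i, gvL DF u v i * b i := by
    have hz : (fun i => u i + 0 * a i) = u := by funext i; ring
    have hz' : (fun i => v i + 0 * b i) = v := by funext i; ring
    simp only [hDdef, hz, hz']
  rw [← hφ1, ← hφ0, ← hD0]
  rw [abs_le]
  constructor <;> nlinarith [hup, hlow]

lemma F_lower {p : ℕ} (F : (Fin p → ℝ) → ℝ) (DF : (Fin p → ℝ) → (Fin p → ℝ))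
    (hDF : ∀ x, HasFDerivAt F (vecCLM (DF x)) x) (K R : ℝ)
    (hK : ∀ x : Fin p → ℝ, (∑ i, |x i|) ≤ R → ∀ i, |DF x i| ≤ K)
    (x : Fin p → ℝ) (hx : (∑ i, |x i|) ≤ R) :
    F (fun _ => 0) - K * ∑ i, |x i| ≤ F x := by
  set ψ : ℝ → ℝ := fun t => F (fun i => t * x i) + t * (K * ∑ i, |x i|) with hψdef
  have hψ : ∀ t : ℝ, HasDerivAt ψ ((∑ i, DF (fun i => t * x i) i * x i) + K * ∑ i, |x i|) t := by
    intro t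
    have hc : HasDerivAt (fun t : ℝ => (fun i => t * x i)) (fun i => x i) t := by
      rw [hasDerivAt_pi]
      intro i
      simpa using (hasDerivAt_id t).mul_const (x i)
    have hF := (hDF _).comp_hasDerivAt t hc
    rw [vecCLM_apply] at hF
    have hlin : HasDerivAt (fun t : ℝ => t * (K * ∑ i, |x i|)) (K * ∑ i, |x i|) t := by
      simpa using (hasDerivAt_id t).mul_const (K * ∑ i, |x i|)
    exact hF.add hlin
  have hmono : MonotoneOn ψ (Set.Icc (0:ℝ) 1) := by
    apply monotoneOn_of_hasDerivWithinAt_nonneg (convex_Icc 0 1)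
      (fun t _ => (hψ t).continuousAt.continuousWithinAt)
      (fun t ht => ((hψ t).hasDerivWithinAt))
    intro t ht
    rw [interior_Icc] at ht
    have hball : (∑ i, |t * x i|) ≤ R := by
      calc (∑ i, |t * x i|) ≤ ∑ i, |x i| := by
            refine Finset.sum_le_sum fun i _ => ?_
            rw [abs_mul, abs_of_pos ht.1]
            nlinarith [abs_nonneg (x i), ht.1, ht.2]
        _ ≤ R := hx
    have hper : ∀ i : Fin p, -(K * |x i|) ≤ DF (fun i => t * x i) i * x i := by
      intro i
      have h1 := hK _ hball i
      have h2 : |DF (fun i => t * x i) i * x i| ≤ K * |x i| := by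
        rw [abs_mul]
        exact mul_le_mul_of_nonneg_right h1 (abs_nonneg _)
      linarith [(abs_le.1 h2).1]
    have : -(K * ∑ i, |x i|) ≤ ∑ i, DF (fun i => t * x i) i * x i := by
      calc -(K * ∑ i, |x i|) = ∑ i, -(K * |x i|) := by
            rw [Finset.mul_sum, ← Finset.sum_neg_distrib]
        _ ≤ _ := Finset.sum_le_sum fun i _ => hper i
    linarith
  have h01 := hmono (Set.mem_Icc.2 ⟨le_refl 0, zero_le_one⟩)
    (Set.mem_Icc.2 ⟨zero_le_one, le_refl 1⟩) zero_le_one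
  have hz : (fun i : Fin p => (0:ℝ) * x i) = fun _ => (0:ℝ) := by funext i; ring
  have ho : (fun i : Fin p => (1:ℝ) * x i) = x := by funext i; ring
  simp only [hψdef, hz, ho, zero_mul, add_zero, one_mul] at h01
  linarith

lemma pow_le_inv_mul (ρ : ℝ) (h0 : 0 ≤ ρ) (h1 : ρ < 1) (k : ℕ) (hk : 1 ≤ k) :
    ρ^k ≤ (1/(1-ρ)) / k := by
  have hkpos : (0:ℝ) < k := by exact_mod_cast hk
  have hgeom : ∑ j ∈ range k, ρ^j ≤ 1/(1-ρ) := by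
    rw [geom_sum_eq (ne_of_lt h1)]
    have heq : (ρ^k - 1)/(ρ - 1) = (1 - ρ^k)/(1-ρ) := by
      rw [div_eq_div_iff (by linarith) (by linarith)]
      ring
    rw [heq]
    gcongr
    · nlinarith [pow_nonneg h0 k]
  have hterm : (k:ℝ) * ρ^k ≤ ∑ j ∈ range k, ρ^j := by
    calc (k:ℝ) * ρ^k = ∑ _j ∈ range k, ρ^k := by
          rw [Finset.sum_const, card_range, nsmul_eq_mul]
      _ ≤ ∑ j ∈ range k, ρ^j := by
          refine Finset.sum_le_sum fun j hj => ?_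
          exact pow_le_pow_of_le_one h0 h1.le (le_of_lt (mem_range.1 hj))
  rw [div_div, le_div_iff₀ (by nlinarith : (0:ℝ) < (1-ρ) * k)]
  calc ρ^k * ((1-ρ) * k) = (1-ρ) * ((k:ℝ) * ρ^k) := by ring
    _ ≤ (1-ρ) * ∑ j ∈ range k, ρ^j := by
        apply mul_le_mul_of_nonneg_left hterm (by linarith)
    _ ≤ 1 := by
        have := mul_le_mul_of_nonneg_left hgeom (by linarith : (0:ℝ) ≤ 1-ρ)
        rw [mul_one_div, div_self (by linarith : (1:ℝ)-ρ ≠ 0)] at this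
        linarith

lemma invsq_tail (k : ℕ) (hk : 1 ≤ k) (n : ℕ) :
    ∑ j ∈ range n, (1:ℝ)/((k+j:ℕ):ℝ)^2 ≤ 2 / k := by
  have hkpos : (0:ℝ) < k := by exact_mod_cast hk
  have htel : ∑ j ∈ range n, ((2:ℝ)/((k+j:ℕ):ℝ) - 2/((k+(j+1):ℕ):ℝ))
      = 2/(k:ℝ) - 2/((k+n:ℕ):ℝ) := by
    have := Finset.sum_range_sub' (f := fun j : ℕ => (2:ℝ)/((k+j:ℕ):ℝ)) n
    simpa using this
  have hterm : ∀ j ∈ range n, (1:ℝ)/((k+j:ℕ):ℝ)^2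
      ≤ (2:ℝ)/((k+j:ℕ):ℝ) - 2/((k+(j+1):ℕ):ℝ) := by
    intro j _
    have hm : (1:ℝ) ≤ ((k+j:ℕ):ℝ) := by
      have : 1 ≤ k + j := le_add_right hk
      exact_mod_cast this
    set m : ℝ := ((k+j:ℕ):ℝ) with hm'
    have hmn : ((k+(j+1):ℕ):ℝ) = m + 1 := by push_cast [hm']; ring
    rw [hmn]
    have hmpos : (0:ℝ) < m := by linarith
    rw [div_sub_div _ _ (ne_of_gt hmpos) (by linarith : m + 1 ≠ 0),
      div_le_div_iff₀ (by positivity) (by nlinarith)]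
    nlinarith
  calc ∑ j ∈ range n, (1:ℝ)/((k+j:ℕ):ℝ)^2
      ≤ ∑ j ∈ range n, ((2:ℝ)/((k+j:ℕ):ℝ) - 2/((k+(j+1):ℕ):ℝ)) :=
        Finset.sum_le_sum hterm
    _ = 2/(k:ℝ) - 2/((k+n:ℕ):ℝ) := htel
    _ ≤ 2 / k := by
        have h1 : (0:ℝ) < ((k+n:ℕ):ℝ) := by positivity
        have h2 : (0:ℝ) ≤ 2/((k+n:ℕ):ℝ) := by positivity
        linarith

set_option maxHeartbeats 4000000 in
/-- STATEMENT 11 (Objective convergence controlled by gradient convergence),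
Lasso case (trivial groups).  `F` is convex, `C^{1,1}` with
`‖∇F(x)−∇F(x')‖_∞ ≤ M_F ‖x−x'‖₁`, gradient bound `K` on `{‖x‖₁ ≤ B²/2}` with
`B² = 2G(u₀,v₀)`; `M_G` bounds the Lipschitz constant of `∇G` on the ball,
`κ = max(1, (1+K²)/M_G)`, `τ = 1/(κM_G)`, `ρ = 1 − 1/(κM_G)`,
`x_k = u_k·v_k` and `Φ(x) = F(x) + ‖x‖₁`.  Then for some `C > 0`,
`Φ(x_k) − lim_j Φ(x_j) ≤ C Σ_{j≥k} ‖∇G(u_j,v_j)‖² + C ρ^k`; in particular, if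
`‖∇G(u_k,v_k)‖ = O(1/k)` then `Φ(x_k)` converges at rate `O(1/k)`. -/
theorem statement11 {p : ℕ}
    (F : (Fin p → ℝ) → ℝ) (DF : (Fin p → ℝ) → (Fin p → ℝ))
    (hDF : ∀ x, HasFDerivAt F (vecCLM (DF x)) x)
    (hconv : ConvexOn ℝ Set.univ F)
    (MF K B MG κ τ : ℝ)
    (hlip : ∀ x x' : Fin p → ℝ, ∀ i, |DF x i - DF x' i| ≤ MF * ∑ i', |x i' - x' i'|)
    (hK : ∀ x : Fin p → ℝ, (∑ i, |x i|) ≤ B^2/2 → ∀ i, |DF x i| ≤ K)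
    (u₀ v₀ : Fin p → ℝ)
    (hB : B^2 = 2 * Gobj F u₀ v₀)
    (hMGlip : ∀ u₁ v₁ u₂ v₂ : Fin p → ℝ,
      (1/2) * ((∑ i, (u₁ i)^2) + ∑ i, (v₁ i)^2) ≤ B^2/2 →
      (1/2) * ((∑ i, (u₂ i)^2) + ∑ i, (v₂ i)^2) ≤ B^2/2 →
      Real.sqrt ((∑ i, (guL DF u₁ v₁ i - guL DF u₂ v₂ i)^2)
          + ∑ i, (gvL DF u₁ v₁ i - gvL DF u₂ v₂ i)^2)
        ≤ MG * Real.sqrt ((∑ i, (u₁ i - u₂ i)^2) + ∑ i, (v₁ i - v₂ i)^2))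
    (hMGpos : 0 < MG)
    (hκ : κ = max 1 ((1 + K^2) / MG))
    (hτ : τ = 1 / (κ * MG))
    (U V : ℕ → Fin p → ℝ) (hU0 : U 0 = u₀) (hV0 : V 0 = v₀)
    (hUrec : ∀ k, U (k+1) = fun i => U k i - τ * guL DF (U k) (V k) i)
    (hVrec : ∀ k, V (k+1) = fun i => V k i - τ * gvL DF (U k) (V k) i)
    (hball : ∀ k, (1/2) * ((∑ i, (U k i)^2) + ∑ i, (V k i)^2) ≤ B^2/2) :
    ∃ C > 0, ∃ Φlim : ℝ,
      Tendsto (fun k => F (fun i => U k i * V k i) + ∑ i, |U k i * V k i|)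
        atTop (nhds Φlim) ∧
      (∀ k : ℕ,
        F (fun i => U k i * V k i) + (∑ i, |U k i * V k i|) - Φlim
          ≤ C * (∑' j : ℕ, gradGsqL DF (U (k + j)) (V (k + j)))
            + C * (1 - 1/(κ * MG))^k) ∧
      ((∃ c : ℝ, ∀ k : ℕ, 1 ≤ k → Real.sqrt (gradGsqL DF (U k) (V k)) ≤ c / k) →
        ∃ c' : ℝ, ∀ k : ℕ, 1 ≤ k →
          F (fun i => U k i * V k i) + (∑ i, |U k i * V k i|) - Φlim ≤ c' / k) := by
  -- scalar facts
  have hκ1 : (1:ℝ) ≤ κ := by rw [hκ]; exact le_max_left _ _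
  have hκpos : (0:ℝ) < κ := by linarith
  have hκMGpos : 0 < κ * MG := mul_pos hκpos hMGpos
  have hκMG : 1 + K^2 ≤ κ * MG := by
    have h := le_max_right 1 ((1 + K^2)/MG)
    rw [← hκ] at h
    calc 1 + K^2 = ((1+K^2)/MG) * MG := by field_simp
      _ ≤ κ * MG := mul_le_mul_of_nonneg_right h hMGpos.le
  have hτpos : 0 < τ := by rw [hτ]; positivity
  have hτval : τ * (κ * MG) = 1 := by rw [hτ]; field_simp
  have hτMG : τ * MG ≤ 1 := by nlinarith
  have hτK : τ * (1 + K^2) ≤ 1 := by nlinarith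
  have hτ1 : τ ≤ 1 := by nlinarith [sq_nonneg K]
  set ρ : ℝ := 1 - 1/(κ * MG) with hρdef
  have hρτ : ρ = 1 - τ := by rw [hρdef, hτ]
  have hρ0 : 0 ≤ ρ := by
    rw [hρτ]; linarith
  have hρ1 : ρ < 1 := by
    rw [hρτ]; linarith
  clear_value ρ
  -- ℓ¹ ball for x_k
  have hxball : ∀ k, (∑ i, |U k i * V k i|) ≤ B^2/2 := by
    intro k
    refine le_trans ?_ (hball k)
    calc (∑ i, |U k i * V k i|) ≤ ∑ i, ((1/2) * ((U k i)^2 + (V k i)^2)) := by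
          refine Finset.sum_le_sum fun i _ => ?_
          rw [abs_mul]
          nlinarith [sq_nonneg (|U k i| - |V k i|), sq_abs (U k i), sq_abs (V k i)]
      _ = (1/2) * ((∑ i, (U k i)^2) + ∑ i, (V k i)^2) := by
          rw [← Finset.sum_add_distrib, Finset.mul_sum]
  -- abbreviations
  set gsq : ℕ → ℝ := fun k => gradGsqL DF (U k) (V k) with hgsqdef
  set g : ℕ → ℝ := fun k => Gobj F (U k) (V k) with hgdef
  have hgs : ∀ n, gradGsqL DF (U n) (V n) = gsq n := fun n => by rw [hgsqdef]
  have hgG : ∀ n, Gobj F (U n) (V n) = g n := fun n => by rw [hgdef]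
  clear_value gsq g
  clear hgsqdef hgdef
  have hgsqnn : ∀ k, 0 ≤ gsq k := fun k => by
    rw [← hgs k]; simp only [gradGsqL]; positivity
  -- descent inequalities
  have hdescent : ∀ k, g (k+1) ≤ g k - (τ/2) * gsq k ∧ g k - g (k+1) ≤ (3*τ/2) * gsq k := by
    intro k
    set aa : Fin p → ℝ := fun i => -τ * guL DF (U k) (V k) i with haadef
    set bb : Fin p → ℝ := fun i => -τ * gvL DF (U k) (V k) i with hbbdef
    have haU : (fun i => U k i + aa i) = U (k+1) := by
      funext i; rw [hUrec k]; simp only [haadef]; ring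
    have hbV : (fun i => V k i + bb i) = V (k+1) := by
      funext i; rw [hVrec k]; simp only [hbbdef]; ring
    have hb1 : (1/2) * ((∑ i, (U k i + aa i)^2) + ∑ i, (V k i + bb i)^2) ≤ B^2/2 := by
      have h := hball (k+1)
      rw [← haU, ← hbV] at h
      simpa using h
    have htay := taylor_bound F DF hDF MG B hMGlip (U k) (V k) aa bb (hball k) hb1
    rw [haU, hbV] at htay
    have hip : (∑ i, guL DF (U k) (V k) i * aa i) + ∑ i, gvL DF (U k) (V k) i * bb i
        = -τ * gsq k := by
      have h1 : ∀ f : Fin p → ℝ, (∑ i, f i * (-τ * f i)) = -τ * ∑ i, (f i)^2 := by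
        intro f
        rw [Finset.mul_sum]
        exact Finset.sum_congr rfl fun i _ => by ring
      simp only [haadef, hbbdef]
      rw [h1, h1, ← hgs k]
      simp only [gradGsqL]
      ring
    have hSS : (∑ i, (aa i)^2) + ∑ i, (bb i)^2 = τ^2 * gsq k := by
      have h1 : ∀ f : Fin p → ℝ, (∑ i, (-τ * f i)^2) = τ^2 * ∑ i, (f i)^2 := by
        intro f
        rw [Finset.mul_sum]
        exact Finset.sum_congr rfl fun i _ => by ring
      simp only [haadef, hbbdef]
      rw [h1, h1, ← hgs k]
      simp only [gradGsqL]
      ring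
    rw [hip, hSS] at htay
    rw [hgG (k+1), hgG k] at htay
    have habs := abs_le.1 htay
    have hgk := hgsqnn k
    have hkey : MG/2 * (τ^2 * gsq k) ≤ (τ/2) * gsq k := by
      nlinarith [mul_nonneg hτpos.le hgk]
    constructor
    · nlinarith [habs.2]
    · nlinarith [habs.1]
  -- monotonicity & lower bound
  have hganti : Antitone g := by
    apply antitone_nat_of_succ_le
    intro k
    have := (hdescent k).1
    nlinarith [hgsqnn k, hτpos]
  set m : ℝ := F (fun _ => 0) - |K| * (B^2/2) with hmdef
  clear_value m
  have hB2nn : (0:ℝ) ≤ B^2/2 := le_trans (by positivity) (hball 0)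
  have hglow : ∀ k, m ≤ g k := by
    intro k
    have hF := F_lower F DF hDF K (B^2/2) hK (fun i => U k i * V k i) (hxball k)
    have hxnn : 0 ≤ ∑ i, |U k i * V k i| := Finset.sum_nonneg fun i _ => abs_nonneg _
    have hKabs : K * (∑ i, |U k i * V k i|) ≤ |K| * (B^2/2) := by
      calc K * (∑ i, |U k i * V k i|) ≤ |K| * (∑ i, |U k i * V k i|) :=
            mul_le_mul_of_nonneg_right (le_abs_self K) hxnn
        _ ≤ |K| * (B^2/2) := mul_le_mul_of_nonneg_left (hxball k) (abs_nonneg K)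
    have hsq1 : (0:ℝ) ≤ ∑ i, (U k i)^2 := by positivity
    have hsq2 : (0:ℝ) ≤ ∑ i, (V k i)^2 := by positivity
    rw [← hgG k, hmdef]
    simp only [Gobj]
    nlinarith
  -- limit of g
  have hbdd : BddBelow (Set.range g) := by
    refine ⟨m, ?_⟩
    rintro y ⟨n, rfl⟩
    exact hglow n
  set Glim : ℝ := ⨅ n, g n with hGlimdef
  have hGtend : Tendsto g atTop (nhds Glim) := tendsto_atTop_ciInf hganti hbdd
  have hGlimle : ∀ k, Glim ≤ g k := fun k => ciInf_le hbdd k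
  clear_value Glim
  -- summability
  have htel : ∀ n, g n + (τ/2) * ∑ j ∈ Finset.range n, gsq j ≤ g 0 := by
    intro n
    induction n with
    | zero => simp
    | succ n ih =>
      rw [Finset.sum_range_succ]
      have := (hdescent n).1
      nlinarith
  have hsum : Summable gsq := by
    apply summable_of_sum_range_le hgsqnn (c := (2/τ) * (g 0 - m))
    intro n
    rw [div_mul_eq_mul_div, le_div_iff₀ hτpos]
    have h1 := htel n
    have h2 := hglow n
    nlinarith
  have hsumshift : ∀ k, Summable (fun j => gsq (k + j)) := by
    intro k
    have := (summable_nat_add_iff k).2 hsum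
    refine this.congr fun j => ?_
    rw [add_comm]
  -- tail bound
  have htail : ∀ k, g k - Glim ≤ (3*τ/2) * ∑' j, gsq (k + j) := by
    intro k
    have hpart : ∀ mm, g k - g (k+mm) ≤ (3*τ/2) * ∑ j ∈ Finset.range mm, gsq (k+j) := by
      intro mm
      induction mm with
      | zero => simp
      | succ mm ih =>
        rw [Finset.sum_range_succ]
        have h2 := (hdescent (k+mm)).2
        have hstep : k + (mm+1) = (k+mm)+1 := by ring
        rw [hstep]
        nlinarith
    have hple : ∀ mm, ∑ j ∈ Finset.range mm, gsq (k+j) ≤ ∑' j, gsq (k+j) :=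
      fun mm => Summable.sum_le_tsum (Finset.range mm) (fun i _ => hgsqnn _) (hsumshift k)
    have hlim2 : Tendsto (fun mm => g (k+mm)) atTop (nhds Glim) := by
      have := hGtend.comp (tendsto_add_atTop_nat k)
      refine this.congr fun mm => ?_
      simp [add_comm]
    have hge : Glim ≥ g k - (3*τ/2) * ∑' j, gsq (k+j) := by
      refine ge_of_tendsto' hlim2 fun mm => ?_
      have h1 := hpart mm
      have h2 := hple mm
      nlinarith [mul_le_mul_of_nonneg_left h2 (by positivity : (0:ℝ) ≤ 3*τ/2)]
    linarith
  -- contraction of u² − v²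
  have hcontr1 : ∀ k i, |(U (k+1) i)^2 - (V (k+1) i)^2| ≤ ρ * |(U k i)^2 - (V k i)^2| := by
    intro k i
    have hwb := hK (fun i' => U k i' * V k i') (hxball k) i
    set w : ℝ := DF (fun i' => U k i' * V k i') i with hwdef
    have hfac : (U (k+1) i)^2 - (V (k+1) i)^2
        = ((1-τ)^2 - τ^2*w^2) * ((U k i)^2 - (V k i)^2) := by
      rw [hUrec k, hVrec k]
      simp only [guL, gvL, ← hwdef]
      ring
    rw [hfac, abs_mul]
    have hw2 : w^2 ≤ K^2 := by nlinarith [abs_nonneg w, sq_abs w, sq_abs K, le_abs_self K]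
    have hfb : |(1-τ)^2 - τ^2*w^2| ≤ ρ := by
      rw [hρτ, abs_le]
      constructor
      · nlinarith [sq_nonneg w, hτpos, hτK, hτ1, mul_nonneg hτpos.le hτpos.le]
      · nlinarith [sq_nonneg w, hτpos, hτK, hτ1, mul_nonneg hτpos.le (sq_nonneg w)]
    exact mul_le_mul_of_nonneg_right hfb (abs_nonneg _)
  set A : ℝ := ∑ i, |(u₀ i)^2 - (v₀ i)^2| with hAdef
  have hAnn : 0 ≤ A := Finset.sum_nonneg fun i _ => abs_nonneg _
  clear_value A
  have hAk : ∀ k, (∑ i, |(U k i)^2 - (V k i)^2|) ≤ ρ^k * A := by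
    intro k
    induction k with
    | zero => simp [hU0, hV0, hAdef]
    | succ k ih =>
      calc (∑ i, |(U (k+1) i)^2 - (V (k+1) i)^2|)
          ≤ ∑ i, ρ * |(U k i)^2 - (V k i)^2| :=
            Finset.sum_le_sum fun i _ => hcontr1 k i
        _ = ρ * ∑ i, |(U k i)^2 - (V k i)^2| := by rw [Finset.mul_sum]
        _ ≤ ρ * (ρ^k * A) := mul_le_mul_of_nonneg_left ih hρ0
        _ = ρ^(k+1) * A := by ring
  -- gap between G and Φ
  have hgap : ∀ k, 0 ≤ g k - (F (fun i => U k i * V k i) + ∑ i, |U k i * V k i|)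
      ∧ g k - (F (fun i => U k i * V k i) + ∑ i, |U k i * V k i|) ≤ (1/2) * (ρ^k * A) := by
    intro k
    have hxeq : g k - (F (fun i => U k i * V k i) + ∑ i, |U k i * V k i|)
        = ∑ i, ((1/2) * (U k i)^2 + (1/2) * (V k i)^2 - |U k i * V k i|) := by
      rw [← hgG k]
      simp only [Gobj]
      rw [Finset.sum_sub_distrib, Finset.sum_add_distrib, ← Finset.mul_sum, ← Finset.mul_sum]
      ring
    constructor
    · rw [hxeq]
      refine Finset.sum_nonneg fun i _ => ?_
      rw [abs_mul]
      nlinarith [sq_nonneg (|U k i| - |V k i|), sq_abs (U k i), sq_abs (V k i)]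
    · rw [hxeq]
      have hper : ∀ i : Fin p, (1/2) * (U k i)^2 + (1/2) * (V k i)^2 - |U k i * V k i|
          ≤ (1/2) * |(U k i)^2 - (V k i)^2| := by
        intro i
        rw [abs_mul]
        rcases le_total |U k i| |V k i| with h | h
        · have h2 : (U k i)^2 ≤ (V k i)^2 := by
            rw [← sq_abs (U k i), ← sq_abs (V k i)]
            exact pow_le_pow_left₀ (abs_nonneg _) h 2
          have habs : |(U k i)^2 - (V k i)^2| = (V k i)^2 - (U k i)^2 := by
            rw [abs_sub_comm]
            exact abs_of_nonneg (by linarith)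
          rw [habs]
          nlinarith [mul_le_mul_of_nonneg_left h (abs_nonneg (U k i)), sq_abs (U k i)]
        · have h2 : (V k i)^2 ≤ (U k i)^2 := by
            rw [← sq_abs (U k i), ← sq_abs (V k i)]
            exact pow_le_pow_left₀ (abs_nonneg _) h 2
          have habs : |(U k i)^2 - (V k i)^2| = (U k i)^2 - (V k i)^2 :=
            abs_of_nonneg (by linarith)
          rw [habs]
          nlinarith [mul_le_mul_of_nonneg_left h (abs_nonneg (V k i)), sq_abs (V k i)]
      calc (∑ i, ((1/2) * (U k i)^2 + (1/2) * (V k i)^2 - |U k i * V k i|))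
          ≤ ∑ i, (1/2) * |(U k i)^2 - (V k i)^2| := Finset.sum_le_sum fun i _ => hper i
        _ = (1/2) * ∑ i, |(U k i)^2 - (V k i)^2| := by rw [Finset.mul_sum]
        _ ≤ (1/2) * (ρ^k * A) := by
            have := hAk k
            linarith
  -- assemble
  set C : ℝ := 3*τ/2 + A/2 + 1 with hCdef
  have hCpos : 0 < C := by positivity
  clear_value C
  refine ⟨C, hCpos, Glim, ?_, ?_, ?_⟩
  · -- convergence of Φ
    have hlo : Tendsto (fun k => g k - (1/2) * (ρ^k * A)) atTop (nhds Glim) := by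
      have hρlim : Tendsto (fun k : ℕ => ρ^k) atTop (nhds 0) :=
        tendsto_pow_atTop_nhds_zero_of_lt_one hρ0 hρ1
      have := hGtend.sub (((hρlim.mul_const A).const_mul (1/2)))
      simpa using this
    refine tendsto_of_tendsto_of_tendsto_of_le_of_le hlo hGtend ?_ ?_
    · intro k
      have := (hgap k).2
      show g k - (1/2) * (ρ^k * A) ≤ F (fun i => U k i * V k i) + ∑ i, |U k i * V k i|
      linarith
    · intro k
      have := (hgap k).1
      show F (fun i => U k i * V k i) + (∑ i, |U k i * V k i|) ≤ g k
      linarith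
  · -- main inequality
    intro k
    have h1 := (hgap k).1
    have h2 := htail k
    have hT : 0 ≤ ∑' j, gsq (k+j) := tsum_nonneg fun j => hgsqnn _
    have hρk : 0 ≤ ρ^k := pow_nonneg hρ0 k
    have hfin : F (fun i => U k i * V k i) + (∑ i, |U k i * V k i|) - Glim
        ≤ C * (∑' j, gsq (k+j)) + C * ρ^k := by
      have h3 := (hgap k).2
      have hCge1 : 3*τ/2 ≤ C := by simp only [hCdef]; linarith
      have hCge2 : A/2 ≤ C := by simp only [hCdef]; linarith
      nlinarith [mul_le_mul_of_nonneg_right hCge1 hT, mul_le_mul_of_nonneg_right hCge2 hρk,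
        mul_nonneg hCpos.le hρk, mul_nonneg hCpos.le hT]
    simp only [hgs]
    exact hfin
  · -- O(1/k) rate
    rintro ⟨c, hc⟩
    refine ⟨C * (2 * c^2) + C * (κ * MG), ?_⟩
    intro k hk
    have hkpos : (0:ℝ) < k := by exact_mod_cast hk
    -- bound the tail by 2c²/k
    have hgsqle : ∀ j : ℕ, 1 ≤ j → gsq j ≤ c^2 * (1/((j:ℕ):ℝ)^2) := by
      intro j hj
      have hjpos : (0:ℝ) < j := by exact_mod_cast hj
      have h := hc j hj
      rw [hgs j] at h
      have hcnn : 0 ≤ c / (j:ℝ) := le_trans (Real.sqrt_nonneg _) h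
      have := pow_le_pow_left₀ (Real.sqrt_nonneg (gsq j)) h 2
      rw [Real.sq_sqrt (hgsqnn j)] at this
      calc gsq j ≤ (c / (j:ℝ))^2 := this
        _ = c^2 * (1/((j:ℕ):ℝ)^2) := by
            rw [div_pow]; ring
    have hTle : (∑' j, gsq (k+j)) ≤ c^2 * (2/(k:ℝ)) := by
      apply Real.tsum_le_of_sum_range_le (fun j => hgsqnn _)
      intro n
      calc ∑ j ∈ Finset.range n, gsq (k+j)
          ≤ ∑ j ∈ Finset.range n, c^2 * (1/((k+j:ℕ):ℝ)^2) := by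
            refine Finset.sum_le_sum fun j _ => ?_
            exact hgsqle (k+j) (le_add_right hk)
        _ = c^2 * ∑ j ∈ Finset.range n, (1:ℝ)/((k+j:ℕ):ℝ)^2 := by rw [Finset.mul_sum]
        _ ≤ c^2 * (2/(k:ℝ)) :=
            mul_le_mul_of_nonneg_left (invsq_tail k hk n) (sq_nonneg c)
    -- bound ρ^k by κMG/k
    have hρk : ρ^k ≤ (κ * MG) / k := by
      have := pow_le_inv_mul ρ hρ0 hρ1 k hk
      have heq : 1/(1-ρ) = κ * MG := by
        rw [hρdef]
        field_simp
        ring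
      rw [heq] at this
      exact this
    have hmain : F (fun i => U k i * V k i) + (∑ i, |U k i * V k i|) - Glim
        ≤ C * (∑' j, gsq (k+j)) + C * ρ^k := by
      have h1 := (hgap k).1
      have h2 := htail k
      have h3 := (hgap k).2
      have hT : 0 ≤ ∑' j, gsq (k+j) := tsum_nonneg fun j => hgsqnn _
      have hρkn : 0 ≤ ρ^k := pow_nonneg hρ0 k
      have hCge1 : 3*τ/2 ≤ C := by simp only [hCdef]; linarith
      have hCge2 : A/2 ≤ C := by simp only [hCdef]; linarith
      nlinarith [mul_le_mul_of_nonneg_right hCge1 hT, mul_le_mul_of_nonneg_right hCge2 hρkn,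
        mul_nonneg hCpos.le hρkn, mul_nonneg hCpos.le hT]
    have e1 : C * (c^2 * (2/(k:ℝ))) = (C * (2 * c^2))/k := by ring
    have e2 : C * ((κ * MG)/(k:ℝ)) = (C * (κ * MG))/k := by ring
    have hb1 : C * (∑' j, gsq (k+j)) ≤ (C * (2 * c^2))/k := by
      rw [← e1]
      exact mul_le_mul_of_nonneg_left hTle hCpos.le
    have hb2 : C * ρ^k ≤ (C * (κ * MG))/k := by
      rw [← e2]
      exact mul_le_mul_of_nonneg_left hρk hCpos.le
    have : (C * (2 * c^2) + C * (κ * MG))/(k:ℝ) = (C * (2 * c^2))/k + (C * (κ * MG))/k :=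
      add_div _ _ _
    rw [this]
    linarith
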